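/- Let V be an n-dimensional vector space over a field F and G ≤ GL(V) a finite group. If ω₁,...,ω_m are differential 1-forms in F[V] ⊗ V* that are linearly independent over the invariant ring F[V]^G, then they are linearly independent over the rational function field F(V); in particular m ≤ n. -/

import Mathlib

open MvPolynomial
set_option synthInstance.maxHeartbeats 1000000
set_option maxHeartbeats 1000000

abbrev GLn (F : Type*) [Field F] (n : ℕ) := (Fin n → F) ≃ₗ[F] (Fin n → F)

variable {F : Type*} [Field F] {n : ℕ}

/-- Matrix of the contragredient action of `g` on the coordinate functions:
`g · z_i = ∑ j (actMat g i j) z_j`. -/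
noncomputable def actMat (g : GLn F n) : Matrix (Fin n) (Fin n) F :=
  Matrix.of fun i j => g.symm (Pi.single j 1) i

/-- Action of `g ∈ GL(V)` on polynomials `F[V]` (contragredient action). -/
noncomputable def polyAct (g : GLn F n) : MvPolynomial (Fin n) F →ₐ[F] MvPolynomial (Fin n) F :=
  aeval fun i => ∑ j, C (actMat g i j) * X j

/-- The degree-one polynomial corresponding to a linear form on `V`. -/
noncomputable def linToPoly (z : (Fin n → F) →ₗ[F] F) : MvPolynomial (Fin n) F :=
  ∑ j, C (z (Pi.single j 1)) * X j

/-- The invariant ring `F[V]^G` as a subalgebra of `F[V]`. -/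
noncomputable def invSub (G : Subgroup (GLn F n)) : Subalgebra F (MvPolynomial (Fin n) F) where
  carrier := {f | ∀ g ∈ G, polyAct g f = f}
  add_mem' := fun {a b} ha hb g hg => by rw [map_add, ha g hg, hb g hg]
  mul_mem' := fun {a b} ha hb g hg => by rw [map_mul, ha g hg, hb g hg]
  algebraMap_mem' := fun r g hg => (polyAct g).commutes r

/-- Action of `g` on a differential 1-form `ω = ∑ i (w i) dz_i`; the result is the
coefficient vector of `g · ω`. -/
noncomputable def oneFormAct (g : GLn F n) (w : Fin n → MvPolynomial (Fin n) F) :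
    Fin n → MvPolynomial (Fin n) F :=
  fun j => ∑ i, polyAct g (w i) * C (actMat g i j)

/-- The coefficient of `dz_J` in `g · dz_I` (a minor determinant of `actMat g`). -/
noncomputable def minorDet (g : GLn F n) (I J : Finset (Fin n)) : F :=
  if h : J.card = I.card then
    Matrix.det (Matrix.of fun a b : Fin I.card =>
      actMat g (I.orderIsoOfFin rfl a) (J.orderIsoOfFin h b))
  else 0

/-- Action of `g` on a differential form `μ = ∑_I u_I dz_I`, given by its coefficient
function `u : Finset (Fin n) → F[V]`. -/
noncomputable def formAct (g : GLn F n) (u : Finset (Fin n) → MvPolynomial (Fin n) F) :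
    Finset (Fin n) → MvPolynomial (Fin n) F :=
  fun J => ∑ I : Finset (Fin n), polyAct g (u I) * C (minorDet g I J)

/-- The sign arising when wedging `dz_I ∧ dz_J` into `dz_(I ∪ J)` for disjoint `I`, `J`. -/
def wsign (I J : Finset (Fin n)) : ℤ :=
  (-1) ^ ((I ×ˢ J).filter fun p => p.2 < p.1).card

/-- Wedge product of differential forms in terms of coefficient functions. -/
noncomputable def wedgeF (u v : Finset (Fin n) → MvPolynomial (Fin n) F) :
    Finset (Fin n) → MvPolynomial (Fin n) F :=
  fun K => ∑ I ∈ K.powerset, wsign I (K \ I) • (u I * v (K \ I))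

/-- The constant 0-form `1`. -/
noncomputable def unitForm : Finset (Fin n) → MvPolynomial (Fin n) F :=
  fun S => if S = ∅ then 1 else 0

/-- Iterated wedge product of a list of forms. -/
noncomputable def iterWedge (L : List (Finset (Fin n) → MvPolynomial (Fin n) F)) :
    Finset (Fin n) → MvPolynomial (Fin n) F :=
  L.foldr wedgeF unitForm

/-- A 1-form, viewed as a differential form via its coefficient function. -/
noncomputable def oneToForm (w : Fin n → MvPolynomial (Fin n) F) :
    Finset (Fin n) → MvPolynomial (Fin n) F :=
  fun S => if h : S.card = 1 then w (S.min' (Finset.card_pos.mp (by omega))) else 0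

/-- The fixed space of `g` in `V`. -/
noncomputable def fixedSpace (g : GLn F n) : Submodule F (Fin n → F) :=
  LinearMap.ker (g.toLinearMap - LinearMap.id)

/-- A reflection: an element of finite order whose fixed space is a hyperplane. -/
def IsReflection (g : GLn F n) : Prop :=
  IsOfFinOrder g ∧ Module.finrank F (fixedSpace g) = n - 1

/-- A transvection: a (necessarily nondiagonalizable) reflection of determinant one. -/
def IsTransvection (g : GLn F n) : Prop :=
  IsReflection g ∧ LinearMap.det g.toLinearMap = 1 ∧ g ≠ 1

/-- The pointwise stabilizer `G_H` of a subspace `H` in `G`. -/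
def pointStab (G : Subgroup (GLn F n)) (H : Submodule F (Fin n → F)) : Subgroup (GLn F n) where
  carrier := {g | g ∈ G ∧ ∀ v ∈ H, g v = v}
  one_mem' := ⟨G.one_mem, fun v _ => rfl⟩
  mul_mem' := fun {a b} ha hb => ⟨G.mul_mem ha.1 hb.1, fun v hv => by
    show a (b v) = v
    rw [hb.2 v hv, ha.2 v hv]⟩
  inv_mem' := fun {a} ha => ⟨G.inv_mem ha.1, fun v hv => by
    show a.symm v = v
    conv_lhs => rw [← ha.2 v hv]
    exact a.symm_apply_apply v⟩

/-- `K_H`: the subgroup of `G_H` of elements of determinant one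
(the transvections in `G_H` together with the identity). -/
noncomputable def KH (G : Subgroup (GLn F n)) (H : Submodule F (Fin n → F)) :
    Subgroup (GLn F n) :=
  pointStab G H ⊓ MonoidHom.ker LinearEquiv.det

/-- `e_H = |G_H : K_H|`. -/
noncomputable def eH (G : Subgroup (GLn F n)) (H : Submodule F (Fin n → F)) : ℕ :=
  ((KH G H).subgroupOf (pointStab G H)).index

/-- The transvection root space of `G_H`: the span of the root vectors of the
transvections in `G_H` (the root vector of `t` spans the range of `t - 1`). -/
noncomputable def trvSpace (G : Subgroup (GLn F n)) (H : Submodule F (Fin n → F)) :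
    Submodule F (Fin n → F) :=
  ⨆ g ∈ {g : GLn F n | g ∈ pointStab G H ∧ IsTransvection g},
    LinearMap.range (g.toLinearMap - LinearMap.id)

/-- `b_H`: the dimension of the transvection root space of `G_H`. -/
noncomputable def bH (G : Subgroup (GLn F n)) (H : Submodule F (Fin n → F)) : ℕ :=
  Module.finrank F (trvSpace G H)

/-- G-invariant 1-forms that are linearly independent over the invariant
ring `F[V]^G` are linearly independent over the rational function field `F(V)`;
in particular there are at most `n` of them. -/

lemma actMat_mul (g h : GLn F n) : actMat (g * h) = actMat h * actMat g := by
  ext i k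
  show (g * h).symm (Pi.single k 1) i = ∑ j, actMat h i j * actMat g j k
  have h1 : (g * h).symm (Pi.single k 1) = h.symm (g.symm (Pi.single k 1)) := rfl
  rw [h1]
  have h2 := congrFun (LinearMap.pi_apply_eq_sum_univ (h.symm.toLinearMap)
    (g.symm (Pi.single k 1))) i
  simp only [LinearEquiv.coe_coe, Finset.sum_apply, Pi.smul_apply, smul_eq_mul] at h2
  rw [h2]
  apply Finset.sum_congr rfl
  intro j _
  have : (fun j' => if j = j' then (1:F) else 0) = Pi.single j 1 := by
    ext j'; simp [Pi.single_apply, eq_comm]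
  rw [this, mul_comm]
  rfl

lemma polyAct_X (g : GLn F n) (i : Fin n) :
    polyAct g (X i) = ∑ j, C (actMat g i j) * X j := by
  simp [polyAct]

lemma polyAct_one : (polyAct (1 : GLn F n)) = AlgHom.id F _ := by
  apply MvPolynomial.algHom_ext
  intro i
  rw [polyAct_X]
  have : ∀ j, actMat (1 : GLn F n) i j = if i = j then 1 else 0 := by
    intro j
    show (1 : GLn F n).symm (Pi.single j 1) i = _
    rw [show ((1 : GLn F n).symm = (1 : GLn F n)) from rfl]
    show Pi.single j 1 i = _
    simp [Pi.single_apply]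
  simp [this, Finset.sum_ite_eq, ite_mul]

lemma polyAct_comp (g h : GLn F n) (p : MvPolynomial (Fin n) F) :
    polyAct g (polyAct h p) = polyAct (g * h) p := by
  have : (polyAct g).comp (polyAct h) = polyAct (g * h) := by
    apply MvPolynomial.algHom_ext
    intro i
    simp only [AlgHom.comp_apply, polyAct_X, map_sum, map_mul, polyAct_X]
    rw [actMat_mul]
    simp only [algHom_C, Finset.mul_sum, Matrix.mul_apply, map_sum]
    rw [Finset.sum_comm]
    apply Finset.sum_congr rfl
    intro k _
    rw [Finset.sum_mul]
    apply Finset.sum_congr rfl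
    intro j _
    rw [MvPolynomial.algebraMap_eq, C_mul]
    ring
  exact congrArg (fun f => f p) this ▸ rfl

lemma polyAct_injective (g : GLn F n) : Function.Injective (polyAct g) := by
  intro a b hab
  have := congrArg (polyAct g⁻¹) hab
  rwa [polyAct_comp, polyAct_comp, inv_mul_cancel, polyAct_one] at this


noncomputable def fracAct (g : GLn F n) :
    FractionRing (MvPolynomial (Fin n) F) →+* FractionRing (MvPolynomial (Fin n) F) :=
  IsFractionRing.lift
    (g := (algebraMap (MvPolynomial (Fin n) F)
      (FractionRing (MvPolynomial (Fin n) F))).comp (polyAct g).toRingHom)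
    ((IsFractionRing.injective _ _).comp (polyAct_injective g))

lemma fracAct_alg (g : GLn F n) (p : MvPolynomial (Fin n) F) :
    fracAct g (algebraMap _ _ p) = algebraMap _ _ (polyAct g p) :=
  IsFractionRing.lift_algebraMap _ p

lemma relAct {m : ℕ} (g : GLn F n) (ω : Fin m → Fin n → MvPolynomial (Fin n) F)
    (hω : ∀ i, oneFormAct g (ω i) = ω i)
    (c : Fin m → FractionRing (MvPolynomial (Fin n) F))
    (hc : ∀ j, ∑ i, c i * algebraMap _ _ (ω i j) = 0) (j : Fin n) :
    ∑ i, fracAct g (c i) * algebraMap _ _ (ω i j) = 0 := by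
  set alg := algebraMap (MvPolynomial (Fin n) F) (FractionRing (MvPolynomial (Fin n) F)) with halg
  have h1 : ∀ j', ∑ i, fracAct g (c i) * alg (polyAct g (ω i j')) = 0 := by
    intro j'
    have := congrArg (fracAct g) (hc j')
    simpa [halg, map_sum, map_mul, fracAct_alg] using this
  calc ∑ i, fracAct g (c i) * alg (ω i j)
      = ∑ i, fracAct g (c i) * alg ((oneFormAct g (ω i)) j) := by
        apply Finset.sum_congr rfl; intro i _; rw [hω i]
    _ = ∑ i, ∑ j', fracAct g (c i) * (alg (polyAct g (ω i j')) * alg (C (actMat g j' j))) := by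
        apply Finset.sum_congr rfl; intro i _
        simp [oneFormAct, map_sum, map_mul, Finset.mul_sum]
    _ = ∑ j', (∑ i, fracAct g (c i) * alg (polyAct g (ω i j'))) * alg (C (actMat g j' j)) := by
        rw [Finset.sum_comm]
        apply Finset.sum_congr rfl; intro j' _
        rw [Finset.sum_mul]
        apply Finset.sum_congr rfl; intro i _
        ring
    _ = 0 := by simp [h1]

theorem stmt0 {F : Type*} [Field F] {n m : ℕ} (G : Subgroup (GLn F n)) [Finite G]
    (ω : Fin m → (Fin n → MvPolynomial (Fin n) F))
    (hωinv : ∀ i, ∀ g ∈ G, oneFormAct g (ω i) = ω i)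
    (hindep : ∀ c : Fin m → MvPolynomial (Fin n) F, (∀ i, c i ∈ invSub G) →
      (∀ j, ∑ i, c i * ω i j = 0) → ∀ i, c i = 0) :
    LinearIndependent (FractionRing (MvPolynomial (Fin n) F))
      (fun i : Fin m => fun j : Fin n =>
        algebraMap (MvPolynomial (Fin n) F) (FractionRing (MvPolynomial (Fin n) F)) (ω i j)) ∧
    m ≤ n := by
  classical
  have _inst : Fintype G := Fintype.ofFinite G
  set K := FractionRing (MvPolynomial (Fin n) F) with hK
  set alg := algebraMap (MvPolynomial (Fin n) F) K with halg
  have halginj : Function.Injective alg := IsFractionRing.injective _ _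
  set v : Fin m → Fin n → K := fun i j => alg (ω i j) with hv
  have key : ∀ c : Fin m → K, (∀ j, ∑ i, c i * v i j = 0) → ∀ i, c i = 0 := by
    by_contra hcon
    push_neg at hcon
    obtain ⟨c1, hrel1, i1, hi1⟩ := hcon
    set P : ℕ → Prop := fun k => ∃ c : Fin m → K, (∀ j, ∑ i, c i * v i j = 0) ∧
      (∃ i, c i ≠ 0) ∧ (Finset.univ.filter (fun i => c i ≠ 0)).card = k with hP
    have hPex : ∃ k, P k := ⟨_, c1, hrel1, ⟨i1, hi1⟩, rfl⟩
    set k0 := Nat.find hPex with hk0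
    obtain ⟨c0, hrel0, ⟨i0, hi0⟩, hcard0⟩ := Nat.find_spec hPex
    set c : Fin m → K := fun i => (c0 i0)⁻¹ * c0 i with hc
    have hci0 : c i0 = 1 := inv_mul_cancel₀ hi0
    have hrel : ∀ j, ∑ i, c i * v i j = 0 := by
      intro j
      have h2 : ∑ i, c i * v i j = (c0 i0)⁻¹ * ∑ i, c0 i * v i j := by
        rw [Finset.mul_sum]
        apply Finset.sum_congr rfl
        intro i _
        rw [hc]
        ring
      rw [h2, hrel0 j, mul_zero]
    have hsupp : ∀ i, (c i ≠ 0 ↔ c0 i ≠ 0) := by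
      intro i
      simp [hc, mul_eq_zero, inv_eq_zero, hi0]
      exact fun _ => inv_ne_zero hi0
    have hcardc : (Finset.univ.filter (fun i => c i ≠ 0)).card = k0 := by
      rw [hk0, ← hcard0]
      congr 1
      apply Finset.filter_congr
      intro i _
      simp [hsupp i]
    have hi0mem : i0 ∈ Finset.univ.filter (fun i => c i ≠ 0) := by
      simp [hci0]
    have hinv : ∀ g ∈ G, ∀ i, fracAct g (c i) = c i := by
      intro g hg
      by_contra hne
      push_neg at hne
      obtain ⟨i2, hi2⟩ := hne
      set d : Fin m → K := fun i => fracAct g (c i) - c i with hd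
      have hdrel : ∀ j, ∑ i, d i * v i j = 0 := by
        intro j
        have h1 := relAct g ω (fun i => hωinv i g hg) c hrel j
        have h2 : ∑ i, d i * v i j = (∑ i, fracAct g (c i) * v i j) - ∑ i, c i * v i j := by
          rw [← Finset.sum_sub_distrib]
          apply Finset.sum_congr rfl
          intro i _
          rw [hd]
          ring
        rw [h2, hrel j, sub_zero]
        exact h1
      have hdsub : Finset.univ.filter (fun i => d i ≠ 0) ⊆
          (Finset.univ.filter (fun i => c i ≠ 0)).erase i0 := by
        intro i hi
        simp only [Finset.mem_filter, Finset.mem_univ, true_and] at hi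
        rw [Finset.mem_erase, Finset.mem_filter]
        refine ⟨?_, Finset.mem_univ i, ?_⟩
        · rintro rfl
          apply hi
          rw [hd]
          simp [hci0]
        · intro hci
          apply hi
          rw [hd]
          simp [hci]
      have hdlt : (Finset.univ.filter (fun i => d i ≠ 0)).card < k0 := by
        calc (Finset.univ.filter (fun i => d i ≠ 0)).card
            ≤ ((Finset.univ.filter (fun i => c i ≠ 0)).erase i0).card :=
              Finset.card_le_card hdsub
          _ < (Finset.univ.filter (fun i => c i ≠ 0)).card :=
              Finset.card_erase_lt_of_mem hi0mem
          _ = k0 := hcardc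
      exact Nat.find_min hPex hdlt ⟨d, hdrel, ⟨i2, by rw [hd]; exact sub_ne_zero_of_ne hi2⟩, rfl⟩
    obtain ⟨q, hq⟩ := IsLocalization.exist_integer_multiples
      (nonZeroDivisors (MvPolynomial (Fin n) F)) Finset.univ c
    have hq' : ∀ i : Fin m, ∃ a : MvPolynomial (Fin n) F,
        alg a = (q : MvPolynomial (Fin n) F) • c i :=
      fun i => RingHom.mem_range.mp (hq i (Finset.mem_univ i))
    choose p hp using hq'
    set N : MvPolynomial (Fin n) F :=
      ∏ g : G, polyAct (g : GLn F n) (q : MvPolynomial (Fin n) F) with hN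
    have hN0 : N ≠ 0 := by
      rw [hN]
      apply Finset.prod_ne_zero_iff.mpr
      intro g _ h0
      exact nonZeroDivisors.ne_zero q.2 (polyAct_injective _ (by rw [h0, map_zero]))
    have hNinv : ∀ g ∈ G, polyAct g N = N := by
      intro g hg
      rw [hN, map_prod]
      have h1 : ∀ h : G, polyAct g (polyAct (h : GLn F n) (q : MvPolynomial (Fin n) F)) =
          polyAct (((⟨g, hg⟩ * h : G) : GLn F n)) (q : MvPolynomial (Fin n) F) := by
        intro h
        rw [polyAct_comp]
        rfl
      rw [Finset.prod_congr rfl (fun h _ => h1 h)]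
      exact Fintype.prod_equiv (Equiv.mulLeft (⟨g, hg⟩ : G)) _ _ (fun h => rfl)
    set M' : MvPolynomial (Fin n) F :=
      ∏ h ∈ Finset.univ.erase (1 : G), polyAct (h : GLn F n) (q : MvPolynomial (Fin n) F)
      with hM
    have hNM : N = (q : MvPolynomial (Fin n) F) * M' := by
      rw [hN, hM, ← Finset.mul_prod_erase Finset.univ _ (Finset.mem_univ (1 : G))]
      congr 1
      show polyAct ((1 : G) : GLn F n) (q : MvPolynomial (Fin n) F) = q
      rw [show (((1 : G) : GLn F n)) = 1 from rfl, polyAct_one]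
      rfl
    set Pc : Fin m → MvPolynomial (Fin n) F := fun i => p i * M' with hPc
    have halgP : ∀ i, alg (Pc i) = c i * alg N := by
      intro i
      rw [hPc]
      show alg (p i * M') = c i * alg N
      rw [map_mul, hp i, Algebra.smul_def, hNM, map_mul]
      ring
    have hPinv : ∀ i, Pc i ∈ invSub G := by
      intro i
      show ∀ g ∈ G, polyAct g (Pc i) = Pc i
      intro g hg
      apply halginj
      calc alg (polyAct g (Pc i)) = fracAct g (alg (Pc i)) := (fracAct_alg g _).symm
        _ = fracAct g (c i) * fracAct g (alg N) := by rw [halgP i, map_mul]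
        _ = c i * alg (polyAct g N) := by rw [hinv g hg i, fracAct_alg]
        _ = c i * alg N := by rw [hNinv g hg]
        _ = alg (Pc i) := (halgP i).symm
    have hPrel : ∀ j, ∑ i, Pc i * ω i j = 0 := by
      intro j
      apply halginj
      rw [map_sum, map_zero]
      calc ∑ i, alg (Pc i * ω i j) = ∑ i, (c i * alg N) * v i j := by
            apply Finset.sum_congr rfl
            intro i _
            rw [map_mul, halgP i]
        _ = alg N * ∑ i, c i * v i j := by
            rw [Finset.mul_sum]
            apply Finset.sum_congr rfl
            intro i _
            ring
        _ = 0 := by rw [hrel j, mul_zero]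
    have hzero := hindep Pc hPinv hPrel i0
    have hfin : alg N = 0 := by
      have h3 : alg (Pc i0) = 0 := by rw [hzero, map_zero]
      rwa [halgP i0, hci0, one_mul] at h3
    exact hN0 (halginj (hfin.trans (map_zero alg).symm))
  have li : LinearIndependent K v := by
    rw [Fintype.linearIndependent_iff]
    intro cc hcc i
    apply key cc _ i
    intro j
    have := congrFun hcc j
    simpa [Finset.sum_apply, smul_eq_mul] using this
  refine ⟨li, ?_⟩
  have h2 := li.fintype_card_le_finrank
  simpa [Module.finrank_fin_fun] using h2
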